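/- Let f = (y − z)(x² − z²)(x² + y² − z²) ∈ ℂ[x,y,z] (a smooth conic inscribed in a triangle), let J_f = ⟨∂f/∂x, ∂f/∂y, ∂f/∂z⟩ be its Jacobian ideal, and let m = ⟨x, y, z⟩. Then the colon ideal (J_f : m) equals J_f; that is, J_f is saturated with respect to m, i.e. the curve f = 0 is a free plane curve. -/

import Mathlib

open MvPolynomial

set_option maxHeartbeats 2000000

noncomputable section CFaux

abbrev CF_R : Type := MvPolynomial (Fin 3) ℂ

lemma CF_primeX0 : Prime (X 0 : CF_R) := by
  have h : Prime ((MvPolynomial.finSuccEquiv ℂ 2) (X 0 : CF_R)) := by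
    rw [MvPolynomial.finSuccEquiv_X_zero]; exact Polynomial.prime_X
  exact (MulEquiv.prime_iff (MvPolynomial.finSuccEquiv ℂ 2).toMulEquiv).mp h

lemma CF_primeXi (i : Fin 3) : Prime (X i : CF_R) := by
  have h := (MulEquiv.prime_iff
    (MvPolynomial.renameEquiv ℂ (Equiv.swap (0 : Fin 3) i)).toMulEquiv).mpr CF_primeX0
  simpa using h

lemma CF_primeYmZ : Prime (X 1 - X 2 : CF_R) := by
  let phi : CF_R →ₐ[ℂ] CF_R := aeval (fun i => if i = 1 then X 1 - X 2 else X i)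
  let psi : CF_R →ₐ[ℂ] CF_R := aeval (fun i => if i = 1 then X 1 + X 2 else X i)
  have h1 : phi.comp psi = AlgHom.id ℂ CF_R := by
    apply MvPolynomial.algHom_ext; intro i; fin_cases i <;> simp [phi, psi]
  have h2 : psi.comp phi = AlgHom.id ℂ CF_R := by
    apply MvPolynomial.algHom_ext; intro i; fin_cases i <;> simp [phi, psi]
  let e : CF_R ≃ₐ[ℂ] CF_R := AlgEquiv.ofAlgHom phi psi h1 h2
  have h := (MulEquiv.prime_iff e.toMulEquiv).mpr (CF_primeXi 1)
  simpa [e, phi, AlgEquiv.ofAlgHom] using h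

lemma CF_dvd_flip {q L : CF_R} (hL : Prime L) (hq : Prime q) (h : q ∣ L) : L ∣ q := by
  obtain ⟨c, hc⟩ := h
  rcases hL.irreducible.isUnit_or_isUnit hc with h' | h'
  · exact absurd h' hq.not_unit
  · obtain ⟨u, rfl⟩ := h'
    exact ⟨↑u⁻¹, by rw [hc, mul_assoc, Units.mul_inv, mul_one]⟩

lemma CF_unit50 : IsUnit (50 : CF_R) := by
  apply IsUnit.of_mul_eq_one (a := (50 : CF_R)) (C (1/50 : ℂ))
  have : (50 : CF_R) = C (50 : ℂ) := by rw [map_ofNat]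
  rw [this, ← C_mul]; norm_num

lemma CF_cop {v : CF_R}
    (h1 : v ∣ ((-20*X 0^3*X 1 + 20*X 0^3*X 2 - 10*X 0*X 1^3 + 10*X 0*X 1^2*X 2 + 20*X 0*X 1*X 2^2 - 20*X 0*X 2^3) : CF_R))
    (h2 : v ∣ ((-5*X 0^4 - 15*X 0^2*X 1^2 + 10*X 0^2*X 1*X 2 + 10*X 0^2*X 2^2 + 15*X 1^2*X 2^2 - 10*X 1*X 2^3 - 5*X 2^4) : CF_R))
    (h3 : v ∣ ((5*X 0^4 + 5*X 0^2*X 1^2 + 20*X 0^2*X 1*X 2 - 30*X 0^2*X 2^2 + 10*X 1^3*X 2 - 15*X 1^2*X 2^2 - 20*X 1*X 2^3 + 25*X 2^4) : CF_R)) :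
    IsUnit v := by
  obtain ⟨c1, hc1⟩ := h1; obtain ⟨c2, hc2⟩ := h2; obtain ⟨c3, hc3⟩ := h3
  have hG1 : v ∣ (50 : CF_R) * X 1^3 * X 2 * (X 1 - X 2)^2 := by
    refine ⟨(X 0*X 1 - 2*X 0*X 2) * c1 + (X 1^2 + 8*X 1*X 2 - 10*X 2^2) * c2
      + (5*X 1^2 - 4*X 1*X 2 - 2*X 2^2) * c3, ?_⟩
    linear_combination (X 0*X 1 - 2*X 0*X 2) * hc1 + (X 1^2 + 8*X 1*X 2 - 10*X 2^2) * hc2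
      + (5*X 1^2 - 4*X 1*X 2 - 2*X 2^2) * hc3
  have hG2 : v ∣ (-10 : CF_R) * X 0^3 * (X 0 - X 2)^2 * (X 0 + X 2)^2 := by
    refine ⟨(-3*X 0^2*X 1 + X 0^2*X 2 + 3*X 1*X 2^2 + X 2^3) * c1
      + (4*X 0^3 + 2*X 0*X 1^2 - 4*X 0*X 2^2) * c2 + (2*X 0^3) * c3, ?_⟩
    linear_combination (-3*X 0^2*X 1 + X 0^2*X 2 + 3*X 1*X 2^2 + X 2^3) * hc1
      + (4*X 0^3 + 2*X 0*X 1^2 - 4*X 0*X 2^2) * hc2 + (2*X 0^3) * hc3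
  by_contra hnu
  have hv0 : v ≠ 0 := by
    rintro rfl
    have h0 := zero_dvd_iff.mp hG1
    have := congrArg (eval (![0, 2, 1] : Fin 3 → ℂ)) h0
    simp at this <;> norm_num at this
  obtain ⟨fs, hfs, hassoc⟩ := UniqueFactorizationMonoid.exists_prime_factors v hv0
  have hfs0 : fs ≠ 0 := by
    rintro rfl
    simp at hassoc
    exact hnu (hassoc.isUnit isUnit_one)
  obtain ⟨q, hqfs⟩ := Multiset.exists_mem_of_ne_zero hfs0
  have hq : Prime q := hfs q hqfs
  have hqv : q ∣ v := (Multiset.dvd_prod hqfs).trans hassoc.dvd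
  have hqG1 : q ∣ (50 : CF_R) * X 1^3 * X 2 * (X 1 - X 2)^2 := hqv.trans hG1
  rcases hq.dvd_mul.mp hqG1 with h' | h'
  · rcases hq.dvd_mul.mp h' with h'' | h''
    · rcases hq.dvd_mul.mp h'' with h3' | h3'
      · exact hq.not_unit (isUnit_of_dvd_unit h3' CF_unit50)
      · have hd : (X 1 : CF_R) ∣ q := CF_dvd_flip (CF_primeXi 1) hq (hq.dvd_of_dvd_pow h3')
        obtain ⟨c, hc⟩ := hd.trans (hqv.trans hG2)
        have := congrArg (eval (![2, 0, 1] : Fin 3 → ℂ)) hc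
        simp at this <;> norm_num at this
    · have hd : (X 2 : CF_R) ∣ q := CF_dvd_flip (CF_primeXi 2) hq h''
      obtain ⟨c, hc⟩ := hd.trans (hqv.trans hG2)
      have := congrArg (eval (![1, 0, 0] : Fin 3 → ℂ)) hc
      simp at this <;> norm_num at this
  · have hd : (X 1 - X 2 : CF_R) ∣ q := CF_dvd_flip CF_primeYmZ hq (hq.dvd_of_dvd_pow h')
    obtain ⟨c, hc⟩ := hd.trans (hqv.trans hG2)
    have := congrArg (eval (![2, 1, 1] : Fin 3 → ℂ)) hc
    simp at this <;> norm_num at this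

def CF_gxy : Fin 3 → CF_R := fun i => if i = 2 then X 2 else 0
def CF_phixy : CF_R →ₐ[ℂ] CF_R := aeval CF_gxy

lemma CF_phixy_X0 : CF_phixy (X 0) = 0 := by simp [CF_phixy, CF_gxy]
lemma CF_phixy_X1 : CF_phixy (X 1) = 0 := by simp [CF_phixy, CF_gxy]
lemma CF_phixy_X2 : CF_phixy (X 2) = X 2 := by simp [CF_phixy, CF_gxy]

lemma CF_decomp_xy (t : CF_R) : ∃ t1 t2 : CF_R,
    t = X 0 * t1 + X 1 * t2 + CF_phixy t := by
  induction t using MvPolynomial.induction_on with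
  | C a => exact ⟨0, 0, by simp [CF_phixy]⟩
  | add p q hp hq =>
    obtain ⟨p1, p2, hp⟩ := hp; obtain ⟨q1, q2, hq⟩ := hq
    exact ⟨p1 + q1, p2 + q2, by rw [map_add]; linear_combination hp + hq⟩
  | mul_X p i hp =>
    obtain ⟨p1, p2, hp⟩ := hp
    fin_cases i
    · refine ⟨p1 * X 0 + CF_phixy p, p2 * X 0, ?_⟩
      show p * X 0 = X 0 * (p1 * X 0 + CF_phixy p) + X 1 * (p2 * X 0) + CF_phixy (p * X 0)
      rw [map_mul, CF_phixy_X0]; linear_combination (X 0 : CF_R) * hp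
    · refine ⟨p1 * X 1, p2 * X 1 + CF_phixy p, ?_⟩
      show p * X 1 = X 0 * (p1 * X 1) + X 1 * (p2 * X 1 + CF_phixy p) + CF_phixy (p * X 1)
      rw [map_mul, CF_phixy_X1]; linear_combination (X 1 : CF_R) * hp
    · refine ⟨p1 * X 2, p2 * X 2, ?_⟩
      show p * X 2 = X 0 * (p1 * X 2) + X 1 * (p2 * X 2) + CF_phixy (p * X 2)
      rw [map_mul, CF_phixy_X2]; linear_combination (X 2 : CF_R) * hp

lemma CF_mem_xy {t u v : CF_R} (h : X 2 * t = X 0 * u + X 1 * v) :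
    ∃ t1 t2 : CF_R, t = X 0 * t1 + X 1 * t2 := by
  obtain ⟨t1, t2, ht⟩ := CF_decomp_xy t
  have h2 : CF_phixy (X 2 * t) = CF_phixy (X 0 * u + X 1 * v) := by rw [h]
  rw [map_mul, CF_phixy_X2, map_add, map_mul, map_mul, CF_phixy_X0, CF_phixy_X1,
    zero_mul, zero_mul, add_zero] at h2
  have h4 : CF_phixy t = 0 := by
    rcases mul_eq_zero.mp h2 with h' | h'
    · exact absurd h' (MvPolynomial.X_ne_zero 2)
    · exact h'
  exact ⟨t1, t2, by rw [ht, h4, add_zero]⟩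

lemma CF_xdvd {P Q : CF_R} (h : X 1 * P = X 0 * Q) : ∃ t, P = X 0 * t := by
  have hd : (X 0 : CF_R) ∣ X 1 * P := ⟨Q, h⟩
  rcases CF_primeX0.dvd_mul.mp hd with h' | h'
  · obtain ⟨c, hc⟩ := h'
    have := congrArg (eval (![0, 1, 0] : Fin 3 → ℂ)) hc
    simp at this <;> norm_num at this
  · exact h'

lemma CF_mem_span_triple {a b c g : CF_R} (h : g ∈ Ideal.span {a, b, c}) :
    ∃ p q r : CF_R, g = p * a + q * b + r * c := by
  rw [Ideal.mem_span_insert] at h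
  obtain ⟨p, w, hw, rfl⟩ := h
  rw [Ideal.mem_span_insert] at hw
  obtain ⟨q, w2, hw2, rfl⟩ := hw
  rw [Ideal.mem_span_singleton'] at hw2
  obtain ⟨r, rfl⟩ := hw2
  exact ⟨p, q, r, by ring⟩

lemma CF_span_triple_mem {a b c p q r : CF_R} :
    p * a + q * b + r * c ∈ Ideal.span {a, b, c} := by
  have ha : a ∈ Ideal.span {a, b, c} := Ideal.subset_span (by simp)
  have hb : b ∈ Ideal.span {a, b, c} := Ideal.subset_span (by simp)
  have hc : c ∈ Ideal.span {a, b, c} := Ideal.subset_span (by simp)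
  exact Ideal.add_mem _ (Ideal.add_mem _ (Ideal.mul_mem_left _ _ ha)
    (Ideal.mul_mem_left _ _ hb)) (Ideal.mul_mem_left _ _ hc)

lemma CF_E1ne : ((-20*X 0^3*X 1 + 20*X 0^3*X 2 - 10*X 0*X 1^3 + 10*X 0*X 1^2*X 2 + 20*X 0*X 1*X 2^2 - 20*X 0*X 2^3) : CF_R) ≠ 0 := by
  intro h
  have := congrArg (eval (![1, 2, 0] : Fin 3 → ℂ)) h
  simp at this <;> norm_num at this

lemma CF_key (n1 n2 n3 : CF_R)
    (h12 : n1 * (-5*X 0^4 - 15*X 0^2*X 1^2 + 10*X 0^2*X 1*X 2 + 10*X 0^2*X 2^2 + 15*X 1^2*X 2^2 - 10*X 1*X 2^3 - 5*X 2^4) = n2 * (-20*X 0^3*X 1 + 20*X 0^3*X 2 - 10*X 0*X 1^3 + 10*X 0*X 1^2*X 2 + 20*X 0*X 1*X 2^2 - 20*X 0*X 2^3))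
    (h13 : n1 * (5*X 0^4 + 5*X 0^2*X 1^2 + 20*X 0^2*X 1*X 2 - 30*X 0^2*X 2^2 + 10*X 1^3*X 2 - 15*X 1^2*X 2^2 - 20*X 1*X 2^3 + 25*X 2^4) = n3 * (-20*X 0^3*X 1 + 20*X 0^3*X 2 - 10*X 0*X 1^3 + 10*X 0*X 1^2*X 2 + 20*X 0*X 1*X 2^2 - 20*X 0*X 2^3)) :
    ∃ a : CF_R, n1 = a * (-20*X 0^3*X 1 + 20*X 0^3*X 2 - 10*X 0*X 1^3 + 10*X 0*X 1^2*X 2 + 20*X 0*X 1*X 2^2 - 20*X 0*X 2^3) ∧ n2 = a * (-5*X 0^4 - 15*X 0^2*X 1^2 + 10*X 0^2*X 1*X 2 + 10*X 0^2*X 2^2 + 15*X 1^2*X 2^2 - 10*X 1*X 2^3 - 5*X 2^4) ∧ n3 = a * (5*X 0^4 + 5*X 0^2*X 1^2 + 20*X 0^2*X 1*X 2 - 30*X 0^2*X 2^2 + 10*X 1^3*X 2 - 15*X 1^2*X 2^2 - 20*X 1*X 2^3 + 25*X 2^4) := by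
  obtain ⟨e', n', c', hrel, hce, hcn⟩ :=
    UniqueFactorizationMonoid.exists_reduced_factors ((-20*X 0^3*X 1 + 20*X 0^3*X 2 - 10*X 0*X 1^3 + 10*X 0*X 1^2*X 2 + 20*X 0*X 1*X 2^2 - 20*X 0*X 2^3) : CF_R) CF_E1ne n1
  have hc0 : c' ≠ 0 := left_ne_zero_of_mul (hce.symm ▸ CF_E1ne)
  have h12' : n' * (-5*X 0^4 - 15*X 0^2*X 1^2 + 10*X 0^2*X 1*X 2 + 10*X 0^2*X 2^2 + 15*X 1^2*X 2^2 - 10*X 1*X 2^3 - 5*X 2^4) = n2 * e' := by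
    have : c' * (n' * (-5*X 0^4 - 15*X 0^2*X 1^2 + 10*X 0^2*X 1*X 2 + 10*X 0^2*X 2^2 + 15*X 1^2*X 2^2 - 10*X 1*X 2^3 - 5*X 2^4)) = c' * (n2 * e') := by
      linear_combination h12 + (-5*X 0^4 - 15*X 0^2*X 1^2 + 10*X 0^2*X 1*X 2 + 10*X 0^2*X 2^2 + 15*X 1^2*X 2^2 - 10*X 1*X 2^3 - 5*X 2^4) * hcn - n2 * hce
    exact mul_left_cancel₀ hc0 this
  have h13' : n' * (5*X 0^4 + 5*X 0^2*X 1^2 + 20*X 0^2*X 1*X 2 - 30*X 0^2*X 2^2 + 10*X 1^3*X 2 - 15*X 1^2*X 2^2 - 20*X 1*X 2^3 + 25*X 2^4) = n3 * e' := by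
    have : c' * (n' * (5*X 0^4 + 5*X 0^2*X 1^2 + 20*X 0^2*X 1*X 2 - 30*X 0^2*X 2^2 + 10*X 1^3*X 2 - 15*X 1^2*X 2^2 - 20*X 1*X 2^3 + 25*X 2^4)) = c' * (n3 * e') := by
      linear_combination h13 + (5*X 0^4 + 5*X 0^2*X 1^2 + 20*X 0^2*X 1*X 2 - 30*X 0^2*X 2^2 + 10*X 1^3*X 2 - 15*X 1^2*X 2^2 - 20*X 1*X 2^3 + 25*X 2^4) * hcn - n3 * hce
    exact mul_left_cancel₀ hc0 this
  have he2 : e' ∣ ((-5*X 0^4 - 15*X 0^2*X 1^2 + 10*X 0^2*X 1*X 2 + 10*X 0^2*X 2^2 + 15*X 1^2*X 2^2 - 10*X 1*X 2^3 - 5*X 2^4) : CF_R) :=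
    hrel.dvd_of_dvd_mul_right ⟨n2, by linear_combination h12'⟩
  have he3 : e' ∣ ((5*X 0^4 + 5*X 0^2*X 1^2 + 20*X 0^2*X 1*X 2 - 30*X 0^2*X 2^2 + 10*X 1^3*X 2 - 15*X 1^2*X 2^2 - 20*X 1*X 2^3 + 25*X 2^4) : CF_R) :=
    hrel.dvd_of_dvd_mul_right ⟨n3, by linear_combination h13'⟩
  have he1 : e' ∣ ((-20*X 0^3*X 1 + 20*X 0^3*X 2 - 10*X 0*X 1^3 + 10*X 0*X 1^2*X 2 + 20*X 0*X 1*X 2^2 - 20*X 0*X 2^3) : CF_R) := ⟨c', by rw [← hce]; ring⟩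
  have hu : IsUnit e' := CF_cop he1 he2 he3
  obtain ⟨w, hw⟩ := IsUnit.exists_right_inv hu
  have ha1 : n1 = (n' * w) * (-20*X 0^3*X 1 + 20*X 0^3*X 2 - 10*X 0*X 1^3 + 10*X 0*X 1^2*X 2 + 20*X 0*X 1*X 2^2 - 20*X 0*X 2^3) := by
    linear_combination -hcn - (c' * n') * hw + (n' * w) * hce
  refine ⟨n' * w, ha1, ?_, ?_⟩
  · have : (-20*X 0^3*X 1 + 20*X 0^3*X 2 - 10*X 0*X 1^3 + 10*X 0*X 1^2*X 2 + 20*X 0*X 1*X 2^2 - 20*X 0*X 2^3) * n2 = (-20*X 0^3*X 1 + 20*X 0^3*X 2 - 10*X 0*X 1^3 + 10*X 0*X 1^2*X 2 + 20*X 0*X 1*X 2^2 - 20*X 0*X 2^3) * ((n' * w) * (-5*X 0^4 - 15*X 0^2*X 1^2 + 10*X 0^2*X 1*X 2 + 10*X 0^2*X 2^2 + 15*X 1^2*X 2^2 - 10*X 1*X 2^3 - 5*X 2^4)) := by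
      linear_combination -h12 + (-5*X 0^4 - 15*X 0^2*X 1^2 + 10*X 0^2*X 1*X 2 + 10*X 0^2*X 2^2 + 15*X 1^2*X 2^2 - 10*X 1*X 2^3 - 5*X 2^4) * ha1
    exact mul_left_cancel₀ CF_E1ne this
  · have : (-20*X 0^3*X 1 + 20*X 0^3*X 2 - 10*X 0*X 1^3 + 10*X 0*X 1^2*X 2 + 20*X 0*X 1*X 2^2 - 20*X 0*X 2^3) * n3 = (-20*X 0^3*X 1 + 20*X 0^3*X 2 - 10*X 0*X 1^3 + 10*X 0*X 1^2*X 2 + 20*X 0*X 1*X 2^2 - 20*X 0*X 2^3) * ((n' * w) * (5*X 0^4 + 5*X 0^2*X 1^2 + 20*X 0^2*X 1*X 2 - 30*X 0^2*X 2^2 + 10*X 1^3*X 2 - 15*X 1^2*X 2^2 - 20*X 1*X 2^3 + 25*X 2^4)) := by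
      linear_combination -h13 + (5*X 0^4 + 5*X 0^2*X 1^2 + 20*X 0^2*X 1*X 2 - 30*X 0^2*X 2^2 + 10*X 1^3*X 2 - 15*X 1^2*X 2^2 - 20*X 1*X 2^3 + 25*X 2^4) * ha1
    exact mul_left_cancel₀ CF_E1ne this

lemma CF_syz_complete (p1 p2 p3 : CF_R)
    (hp : p1 * (-20*X 0^3*X 1 + 20*X 0^3*X 2 - 10*X 0*X 1^3 + 10*X 0*X 1^2*X 2 + 20*X 0*X 1*X 2^2 - 20*X 0*X 2^3) + p2 * (-5*X 0^4 - 15*X 0^2*X 1^2 + 10*X 0^2*X 1*X 2 + 10*X 0^2*X 2^2 + 15*X 1^2*X 2^2 - 10*X 1*X 2^3 - 5*X 2^4) + p3 * (5*X 0^4 + 5*X 0^2*X 1^2 + 20*X 0^2*X 1*X 2 - 30*X 0^2*X 2^2 + 10*X 1^3*X 2 - 15*X 1^2*X 2^2 - 20*X 1*X 2^3 + 25*X 2^4) = 0) :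
    ∃ a b : CF_R, p1 = a * (X 0^2 + 5*X 1*X 2 - 5*X 2^2) + b * (-3*X 0*X 1 + 4*X 0*X 2) ∧ p2 = a * (X 0*X 1) + b * (5*X 0^2 + 2*X 1^2 - X 1*X 2 - 5*X 2^2)
      ∧ p3 = a * (5*X 0*X 1 - 4*X 0*X 2) + b * (5*X 0^2 - 3*X 1*X 2 - X 2^2) := by
  obtain ⟨a, haN1, haN2, haN3⟩ := CF_key (p2 * (5*X 0^2 - 3*X 1*X 2 - X 2^2) - p3 * (5*X 0^2 + 2*X 1^2 - X 1*X 2 - 5*X 2^2))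
    (p3 * (-3*X 0*X 1 + 4*X 0*X 2) - p1 * (5*X 0^2 - 3*X 1*X 2 - X 2^2)) (p1 * (5*X 0^2 + 2*X 1^2 - X 1*X 2 - 5*X 2^2) - p2 * (-3*X 0*X 1 + 4*X 0*X 2))
    (by linear_combination (5*X 0^2 - 3*X 1*X 2 - X 2^2) * hp) (by linear_combination (-(1:CF_R) * (5*X 0^2 + 2*X 1^2 - X 1*X 2 - 5*X 2^2)) * hp)
  obtain ⟨b, hbM1, hbM2, hbM3⟩ := CF_key ((X 0*X 1) * p3 - (5*X 0*X 1 - 4*X 0*X 2) * p2)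
    ((5*X 0*X 1 - 4*X 0*X 2) * p1 - (X 0^2 + 5*X 1*X 2 - 5*X 2^2) * p3) ((X 0^2 + 5*X 1*X 2 - 5*X 2^2) * p2 - (X 0*X 1) * p1)
    (by linear_combination (-(1:CF_R) * (5*X 0*X 1 - 4*X 0*X 2)) * hp) (by linear_combination (X 0*X 1) * hp)
  refine ⟨a, b, ?_, ?_, ?_⟩
  · have : (-20*X 0^3*X 1 + 20*X 0^3*X 2 - 10*X 0*X 1^3 + 10*X 0*X 1^2*X 2 + 20*X 0*X 1*X 2^2 - 20*X 0*X 2^3) * p1 = (-20*X 0^3*X 1 + 20*X 0^3*X 2 - 10*X 0*X 1^3 + 10*X 0*X 1^2*X 2 + 20*X 0*X 1*X 2^2 - 20*X 0*X 2^3) * (a * (X 0^2 + 5*X 1*X 2 - 5*X 2^2) + b * (-3*X 0*X 1 + 4*X 0*X 2)) := by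
      linear_combination hp + (X 0^2 + 5*X 1*X 2 - 5*X 2^2) * haN1 + (-3*X 0*X 1 + 4*X 0*X 2) * hbM1
    exact mul_left_cancel₀ CF_E1ne this
  · have : (-20*X 0^3*X 1 + 20*X 0^3*X 2 - 10*X 0*X 1^3 + 10*X 0*X 1^2*X 2 + 20*X 0*X 1*X 2^2 - 20*X 0*X 2^3) * p2 = (-20*X 0^3*X 1 + 20*X 0^3*X 2 - 10*X 0*X 1^3 + 10*X 0*X 1^2*X 2 + 20*X 0*X 1*X 2^2 - 20*X 0*X 2^3) * (a * (X 0*X 1) + b * (5*X 0^2 + 2*X 1^2 - X 1*X 2 - 5*X 2^2)) := by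
      linear_combination (X 0*X 1) * haN1 + (5*X 0^2 + 2*X 1^2 - X 1*X 2 - 5*X 2^2) * hbM1
    exact mul_left_cancel₀ CF_E1ne this
  · have : (-20*X 0^3*X 1 + 20*X 0^3*X 2 - 10*X 0*X 1^3 + 10*X 0*X 1^2*X 2 + 20*X 0*X 1*X 2^2 - 20*X 0*X 2^3) * p3 = (-20*X 0^3*X 1 + 20*X 0^3*X 2 - 10*X 0*X 1^3 + 10*X 0*X 1^2*X 2 + 20*X 0*X 1*X 2^2 - 20*X 0*X 2^3) * (a * (5*X 0*X 1 - 4*X 0*X 2) + b * (5*X 0^2 - 3*X 1*X 2 - X 2^2)) := by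
      linear_combination (5*X 0*X 1 - 4*X 0*X 2) * haN1 + (5*X 0^2 - 3*X 1*X 2 - X 2^2) * hbM1
    exact mul_left_cancel₀ CF_E1ne this

lemma CF_pd0 (f : CF_R)
    (hf : f = (X 1 - X 2) * (X 0 ^ 2 - X 2 ^ 2) * (X 0 ^ 2 + X 1 ^ 2 - X 2 ^ 2)) :
    pderiv 0 f = (4*X 0^3*X 1 - 4*X 0^3*X 2 + 2*X 0*X 1^3 - 2*X 0*X 1^2*X 2 - 4*X 0*X 1*X 2^2 + 4*X 0*X 2^3) := by
  subst hf
  simp [pderiv_mul, pderiv_pow, pderiv_X, Pi.single_apply]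
  ring

lemma CF_pd1 (f : CF_R)
    (hf : f = (X 1 - X 2) * (X 0 ^ 2 - X 2 ^ 2) * (X 0 ^ 2 + X 1 ^ 2 - X 2 ^ 2)) :
    pderiv 1 f = (X 0^4 + 3*X 0^2*X 1^2 - 2*X 0^2*X 1*X 2 - 2*X 0^2*X 2^2 - 3*X 1^2*X 2^2 + 2*X 1*X 2^3 + X 2^4) := by
  subst hf
  simp [pderiv_mul, pderiv_pow, pderiv_X, Pi.single_apply]
  ring

lemma CF_pd2 (f : CF_R)
    (hf : f = (X 1 - X 2) * (X 0 ^ 2 - X 2 ^ 2) * (X 0 ^ 2 + X 1 ^ 2 - X 2 ^ 2)) :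
    pderiv 2 f = (-X 0^4 - X 0^2*X 1^2 - 4*X 0^2*X 1*X 2 + 6*X 0^2*X 2^2 - 2*X 1^3*X 2 + 3*X 1^2*X 2^2 + 4*X 1*X 2^3 - 5*X 2^4) := by
  subst hf
  simp [pderiv_mul, pderiv_pow, pderiv_X, Pi.single_apply]
  ring

end CFaux

/-- The conic-line arrangement `(y - z)(x² - z²)(x² + y² - z²) = 0` (a smooth conic
inscribed in a triangle) is a free plane curve: its Jacobian ideal is saturated
with respect to the irrelevant ideal `⟨x, y, z⟩`, i.e. `(J_f : m) = J_f`. -/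
theorem conic_inscribed_in_triangle_is_free
    (f : MvPolynomial (Fin 3) ℂ)
    (hf : f = (X 1 - X 2) * (X 0 ^ 2 - X 2 ^ 2) * (X 0 ^ 2 + X 1 ^ 2 - X 2 ^ 2))
    (Jf : Ideal (MvPolynomial (Fin 3) ℂ))
    (hJf : Jf = Ideal.span {pderiv 0 f, pderiv 1 f, pderiv 2 f})
    (m : Ideal (MvPolynomial (Fin 3) ℂ))
    (hm : m = Ideal.span {X 0, X 1, X 2}) :
    Submodule.colon Jf m = Jf := by
  rw [CF_pd0 f hf, CF_pd1 f hf, CF_pd2 f hf] at hJf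
  apply le_antisymm
  · -- hard direction
    intro g hg
    have hx0 : X 0 ∈ m := by rw [hm]; exact Ideal.subset_span (by simp)
    have hy0 : X 1 ∈ m := by rw [hm]; exact Ideal.subset_span (by simp)
    have hz0 : X 2 ∈ m := by rw [hm]; exact Ideal.subset_span (by simp)
    have hgx := Submodule.mem_colon.mp hg (X 0) hx0
    have hgy := Submodule.mem_colon.mp hg (X 1) hy0
    have hgz := Submodule.mem_colon.mp hg (X 2) hz0
    rw [smul_eq_mul, hJf] at hgx hgy hgz
    obtain ⟨p1, p2, p3, hx⟩ := CF_mem_span_triple hgx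
    obtain ⟨q1, q2, q3, hy⟩ := CF_mem_span_triple hgy
    obtain ⟨s1, s2, s3, hz⟩ := CF_mem_span_triple hgz
    -- three syzygies
    obtain ⟨A, B, hA1c, hA2c, hA3c⟩ := CF_syz_complete
      (X 1*p1 - X 0*q1) (X 1*p2 - X 0*q2) (X 1*p3 - X 0*q3)
      (by linear_combination (5*X 1 : CF_R) * hx - (5*X 0 : CF_R) * hy)
    obtain ⟨Cc, Ec, hC1c, hC2c, hC3c⟩ := CF_syz_complete
      (X 2*q1 - X 1*s1) (X 2*q2 - X 1*s2) (X 2*q3 - X 1*s3)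
      (by linear_combination (5*X 2 : CF_R) * hy - (5*X 1 : CF_R) * hz)
    obtain ⟨Fc, Gc, hF1c, hF2c, hF3c⟩ := CF_syz_complete
      (X 0*s1 - X 2*p1) (X 0*s2 - X 2*p2) (X 0*s3 - X 2*p3)
      (by linear_combination (5*X 0 : CF_R) * hz - (5*X 2 : CF_R) * hx)
    -- independence
    have hlamA : (X 2*A + X 0*Cc + X 1*Fc) * (X 0^2 + 5*X 1*X 2 - 5*X 2^2) + (X 2*B + X 0*Ec + X 1*Gc) * (-3*X 0*X 1 + 4*X 0*X 2) = 0 := by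
      linear_combination (-(X 2) : CF_R) * hA1c - X 0 * hC1c - X 1 * hF1c
    have hlamB : (X 2*A + X 0*Cc + X 1*Fc) * (X 0*X 1) + (X 2*B + X 0*Ec + X 1*Gc) * (5*X 0^2 + 2*X 1^2 - X 1*X 2 - 5*X 2^2) = 0 := by
      linear_combination (-(X 2) : CF_R) * hA2c - X 0 * hC2c - X 1 * hF2c
    have hlamC : (X 2*A + X 0*Cc + X 1*Fc) * (5*X 0*X 1 - 4*X 0*X 2) + (X 2*B + X 0*Ec + X 1*Gc) * (5*X 0^2 - 3*X 1*X 2 - X 2^2) = 0 := by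
      linear_combination (-(X 2) : CF_R) * hA3c - X 0 * hC3c - X 1 * hF3c
    have hlamE : (X 2*A + X 0*Cc + X 1*Fc) * (-20*X 0^3*X 1 + 20*X 0^3*X 2 - 10*X 0*X 1^3 + 10*X 0*X 1^2*X 2 + 20*X 0*X 1*X 2^2 - 20*X 0*X 2^3) = 0 := by
      linear_combination (5*X 0^2 - 3*X 1*X 2 - X 2^2) * hlamB - (5*X 0^2 + 2*X 1^2 - X 1*X 2 - 5*X 2^2) * hlamC
    have hmuE : (X 2*B + X 0*Ec + X 1*Gc) * (-20*X 0^3*X 1 + 20*X 0^3*X 2 - 10*X 0*X 1^3 + 10*X 0*X 1^2*X 2 + 20*X 0*X 1*X 2^2 - 20*X 0*X 2^3) = 0 := by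
      linear_combination (X 0*X 1) * hlamC - (5*X 0*X 1 - 4*X 0*X 2) * hlamB
    have hlam0 : X 2*A + X 0*Cc + X 1*Fc = 0 := by
      rcases mul_eq_zero.mp hlamE with h' | h'
      · exact h'
      · exact absurd h' CF_E1ne
    have hmu0 : X 2*B + X 0*Ec + X 1*Gc = 0 := by
      rcases mul_eq_zero.mp hmuE with h' | h'
      · exact h'
      · exact absurd h' CF_E1ne
    obtain ⟨a1, a2, hAd⟩ := CF_mem_xy (t := A) (u := -Cc) (v := -Fc)
      (by linear_combination hlam0)
    obtain ⟨b1, b2, hBd⟩ := CF_mem_xy (t := B) (u := -Ec) (v := -Gc)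
      (by linear_combination hmu0)
    obtain ⟨t1, ht1⟩ := CF_xdvd (P := p1 - a2 * (X 0^2 + 5*X 1*X 2 - 5*X 2^2) - b2 * (-3*X 0*X 1 + 4*X 0*X 2))
      (Q := q1 + a1 * (X 0^2 + 5*X 1*X 2 - 5*X 2^2) + b1 * (-3*X 0*X 1 + 4*X 0*X 2))
      (by linear_combination hA1c + (X 0^2 + 5*X 1*X 2 - 5*X 2^2) * hAd + (-3*X 0*X 1 + 4*X 0*X 2) * hBd)
    obtain ⟨t2, ht2⟩ := CF_xdvd (P := p2 - a2 * (X 0*X 1) - b2 * (5*X 0^2 + 2*X 1^2 - X 1*X 2 - 5*X 2^2))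
      (Q := q2 + a1 * (X 0*X 1) + b1 * (5*X 0^2 + 2*X 1^2 - X 1*X 2 - 5*X 2^2))
      (by linear_combination hA2c + (X 0*X 1) * hAd + (5*X 0^2 + 2*X 1^2 - X 1*X 2 - 5*X 2^2) * hBd)
    obtain ⟨t3, ht3⟩ := CF_xdvd (P := p3 - a2 * (5*X 0*X 1 - 4*X 0*X 2) - b2 * (5*X 0^2 - 3*X 1*X 2 - X 2^2))
      (Q := q3 + a1 * (5*X 0*X 1 - 4*X 0*X 2) + b1 * (5*X 0^2 - 3*X 1*X 2 - X 2^2))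
      (by linear_combination hA3c + (5*X 0*X 1 - 4*X 0*X 2) * hAd + (5*X 0^2 - 3*X 1*X 2 - X 2^2) * hBd)
    have hfin : X 0 * g = X 0 * (t1 * (4*X 0^3*X 1 - 4*X 0^3*X 2 + 2*X 0*X 1^3 - 2*X 0*X 1^2*X 2 - 4*X 0*X 1*X 2^2 + 4*X 0*X 2^3) + t2 * (X 0^4 + 3*X 0^2*X 1^2 - 2*X 0^2*X 1*X 2 - 2*X 0^2*X 2^2 - 3*X 1^2*X 2^2 + 2*X 1*X 2^3 + X 2^4) + t3 * (-X 0^4 - X 0^2*X 1^2 - 4*X 0^2*X 1*X 2 + 6*X 0^2*X 2^2 - 2*X 1^3*X 2 + 3*X 1^2*X 2^2 + 4*X 1*X 2^3 - 5*X 2^4)) := by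
      linear_combination hx + (4*X 0^3*X 1 - 4*X 0^3*X 2 + 2*X 0*X 1^3 - 2*X 0*X 1^2*X 2 - 4*X 0*X 1*X 2^2 + 4*X 0*X 2^3) * ht1 + (X 0^4 + 3*X 0^2*X 1^2 - 2*X 0^2*X 1*X 2 - 2*X 0^2*X 2^2 - 3*X 1^2*X 2^2 + 2*X 1*X 2^3 + X 2^4) * ht2 + (-X 0^4 - X 0^2*X 1^2 - 4*X 0^2*X 1*X 2 + 6*X 0^2*X 2^2 - 2*X 1^3*X 2 + 3*X 1^2*X 2^2 + 4*X 1*X 2^3 - 5*X 2^4) * ht3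
    have hg' : g = t1 * (4*X 0^3*X 1 - 4*X 0^3*X 2 + 2*X 0*X 1^3 - 2*X 0*X 1^2*X 2 - 4*X 0*X 1*X 2^2 + 4*X 0*X 2^3) + t2 * (X 0^4 + 3*X 0^2*X 1^2 - 2*X 0^2*X 1*X 2 - 2*X 0^2*X 2^2 - 3*X 1^2*X 2^2 + 2*X 1*X 2^3 + X 2^4) + t3 * (-X 0^4 - X 0^2*X 1^2 - 4*X 0^2*X 1*X 2 + 6*X 0^2*X 2^2 - 2*X 1^3*X 2 + 3*X 1^2*X 2^2 + 4*X 1*X 2^3 - 5*X 2^4) :=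
      mul_left_cancel₀ (MvPolynomial.X_ne_zero 0) hfin
    rw [hJf, hg']
    exact CF_span_triple_mem
  · -- easy direction
    intro g hg
    rw [Submodule.mem_colon]
    intro p hp
    rw [smul_eq_mul]
    exact Ideal.mul_mem_right _ _ hg
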